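/- Let p be a prime and m a positive integer with (p, m) ≠ (3, 2), let F be a finite field with p^m elements, and ω a generator of F^×. Let ΓL₁(p^m) denote the subgroup of the permutation group of F generated by the Frobenius map x ↦ x^p and the map x ↦ ω·x. Let A be a subgroup of ΓL₁(p^m) acting transitively on F \ {0}, and let N be an abelian normal subgroup of A. Then N is contained in the subgroup of ΓL₁(p^m) consisting of all multiplication maps x ↦ c·x with c ∈ F^×. In particular, the intersection of A with the group of multiplication maps is the unique largest abelian normal subgroup of A. -/

import Mathlib

private lemma nt_one_le_pow (p a : ℕ) (hp : 2 ≤ p) : 1 ≤ p ^ a :=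
  Nat.one_le_two_pow.trans (Nat.pow_le_pow_left hp a)

private lemma nt_gcd_pow_sub_one (p : ℕ) (hp : 2 ≤ p) : ∀ a, ∀ b, Nat.gcd (p ^ a - 1) (p ^ b - 1) = p ^ Nat.gcd a b - 1 := by
  intro a
  induction a using Nat.strong_induction_on with
  | _ a IH =>
    intro b
    rcases Nat.eq_zero_or_pos a with rfl | ha
    · simp
    · have h2 : 1 ≤ p ^ a := nt_one_le_pow p a hp
      have h1 : p ^ b ≡ p ^ (b % a) [MOD p ^ a - 1] := by
        conv_lhs => rw [← Nat.div_add_mod b a]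
        rw [pow_add, pow_mul]
        have hone : (1 : ℕ) ≡ p ^ a [MOD p ^ a - 1] :=
          (Nat.modEq_iff_dvd' h2).2 (dvd_refl _)
        calc (p ^ a) ^ (b / a) * p ^ (b % a)
            ≡ 1 ^ (b / a) * p ^ (b % a) [MOD p ^ a - 1] :=
              ((hone.symm).pow _).mul_right _
          _ = p ^ (b % a) := by ring
      have hsub : p ^ b - 1 ≡ p ^ (b % a) - 1 [MOD p ^ a - 1] := by
        have hb1 : 1 ≤ p ^ b := nt_one_le_pow p b hp
        have hb2 : 1 ≤ p ^ (b % a) := nt_one_le_pow p _ hp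
        apply Nat.ModEq.add_right_cancel' 1
        rw [Nat.sub_add_cancel hb1, Nat.sub_add_cancel hb2]
        exact h1
      have hmod : (p ^ b - 1) % (p ^ a - 1) = (p ^ (b % a) - 1) % (p ^ a - 1) := hsub
      rw [Nat.gcd_rec (p ^ a - 1) (p ^ b - 1), hmod, ← Nat.gcd_rec,
        Nat.gcd_comm, IH (b % a) (Nat.mod_lt _ ha) a, Nat.gcd_comm (b % a) a, Nat.gcd_comm a (b % a), ← Nat.gcd_rec]

private lemma nt_geom (P : ℕ) (hP : 1 ≤ P) : ∀ t : ℕ, (P - 1) * (∑ k ∈ Finset.range t, P ^ k) = P ^ t - 1 := by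
  intro t
  induction t with
  | zero => simp
  | succ t ih =>
    rw [Finset.sum_range_succ, Nat.mul_add, ih]
    have h1 : 1 ≤ P ^ t := Nat.one_le_pow _ _ hP
    have hc : P - 1 + 1 = P := Nat.succ_pred_eq_of_pos hP
    have h4 : P * P ^ t = (P - 1) * P ^ t + P ^ t := by
      have := add_mul (P-1) 1 (P^t)
      rw [hc, one_mul] at this
      exact this
    have h5 : P ^ (t+1) = P * P ^ t := by rw [pow_succ, mul_comm]
    omega

private lemma nt_geom_mod (P : ℕ) (hP : 1 ≤ P) (t : ℕ) :
    (∑ k ∈ Finset.range t, P ^ k) ≡ t [MOD P - 1] := by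
  induction t with
  | zero => simp [Nat.ModEq.refl]
  | succ t ih =>
    rw [Finset.sum_range_succ]
    have h1 : P ^ t ≡ 1 ^ t [MOD P - 1] :=
      Nat.ModEq.pow _ ((Nat.modEq_iff_dvd' hP).2 (dvd_refl _)).symm
    simpa using ih.add (by simpa using h1)

private lemma nt_pow_ind : ∀ t, 3 ≤ t → (t + 1) ^ 2 ≤ 2 * t ^ 2 := by
  intro t ht; nlinarith

private lemma nt_tsq_le (t : ℕ) (ht : 3 ≤ t) : t ^ 2 ≤ 3 ^ (t - 1) := by
  induction t with
  | zero => omega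
  | succ t ih =>
    rcases Nat.lt_or_ge t 3 with h | h
    · interval_cases t <;> simp_all <;> omega
    · have h1 := nt_pow_ind t h
      have h2 := ih (by omega)
      have h5 : t + 1 - 1 = (t - 1) + 1 := by omega
      rw [h5, pow_succ 3 (t-1)]
      calc (t+1)^2 ≤ 2 * t^2 := h1
        _ ≤ 2 * 3 ^ (t-1) := by omega
        _ ≤ 3 ^ (t-1) * 3 := by omega

private lemma nt_2tsq_le (t : ℕ) (ht : 3 ≤ t) : 2 * t ^ 2 ≤ 4 ^ (t - 1) + 4 := by
  induction t with
  | zero => omega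
  | succ t ih =>
    rcases Nat.lt_or_ge t 3 with h | h
    · interval_cases t <;> simp_all <;> omega
    · have h1 := nt_pow_ind t h
      have h2 := ih (by omega)
      have h3 : (1:ℕ) ≤ 4 ^ (t-1) := Nat.one_le_pow _ _ (by norm_num)
      have h5 : t + 1 - 1 = (t - 1) + 1 := by omega
      have h4 : (16:ℕ) ≤ 4 ^ (t-1) := by
        calc (16:ℕ) = 4 ^ 2 := by norm_num
        _ ≤ 4 ^ (t-1) := Nat.pow_le_pow_right (by norm_num) (by omega)
      rw [h5, pow_succ 4 (t-1)]
      calc 2*(t+1)^2 ≤ 2*(2 * t^2) := by omega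
        _ ≤ 2 * (4 ^ (t-1) + 4) := by omega
        _ ≤ 4 ^ (t-1) * 4 + 4 := by omega

private lemma nt_tsq_le8 (t : ℕ) (ht : 3 ≤ t) : t ^ 2 ≤ 2 * 8 ^ (t - 2) := by
  induction t with
  | zero => omega
  | succ t ih =>
    rcases Nat.lt_or_ge t 3 with h | h
    · interval_cases t <;> simp_all
    · have h1 := nt_pow_ind t h
      have h2 := ih (by omega)
      have h5 : t + 1 - 2 = (t - 2) + 1 := by omega
      have h4 : (1:ℕ) ≤ 8 ^ (t-2) := Nat.one_le_pow _ _ (by norm_num)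
      rw [h5, pow_succ 8 (t-2)]
      calc (t+1)^2 ≤ 2 * t^2 := h1
        _ ≤ 2 * (2 * 8 ^ (t-2)) := by omega
        _ ≤ 2 * (8 ^ (t-2) * 8) := by omega

private lemma nt_d_le (d : ℕ) (hd : 1 ≤ d) : d ≤ 2 ^ (d - 1) := by
  induction d with
  | zero => omega
  | succ d ih =>
    rcases Nat.lt_or_ge d 1 with h | h
    · interval_cases d <;> simp
    · have h2 := ih h
      have : d + 1 - 1 = (d - 1) + 1 := by omega
      rw [this, pow_succ]
      have h3 : (1:ℕ) ≤ 2 ^ (d-1) := Nat.one_le_pow _ _ (by norm_num)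
      omega

private lemma nt_2d_le (d : ℕ) (hd : 1 ≤ d) : 2 * d ≤ 2 ^ d := by
  induction d with
  | zero => omega
  | succ d ih =>
    rcases Nat.lt_or_ge d 1 with h | h
    · interval_cases d <;> simp
    · have h2 := ih h
      rw [pow_succ]
      have h3 : (2:ℕ) ≤ 2 ^ d := Nat.one_lt_two_pow_iff.2 (by omega)
      omega

private lemma nt_4d_le (p d : ℕ) (hp : 3 ≤ p) (hd : 1 ≤ d) (hex : ¬(p = 3 ∧ d = 1)) :
    4 * d ≤ p ^ d := by
  rcases Nat.lt_or_ge p 4 with h3 | h5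
  · -- p = 3, d ≥ 2
    have hp3 : p = 3 := by omega
    have hd2 : 2 ≤ d := by
      rcases Nat.lt_or_ge d 2 with h | h
      · exfalso; exact hex ⟨hp3, by omega⟩
      · exact h
    subst hp3
    clear hex hd
    induction d with
    | zero => omega
    | succ d ih =>
      rcases Nat.lt_or_ge d 2 with h | h
      · interval_cases d
        · omega
        · norm_num
      · have h2 := ih h
        rw [pow_succ]
        have h3 : (9:ℕ) ≤ 3 ^ d := by
          calc (9:ℕ) = 3 ^ 2 := by norm_num
          _ ≤ 3 ^ d := Nat.pow_le_pow_right (by norm_num) h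
        omega
  · -- p ≥ 4 : 4d ≤ 4^d ≤ p^d
    have h1 : 4 * d ≤ 4 ^ d := by
      clear hex hp
      induction d with
      | zero => omega
      | succ d ih =>
        rcases Nat.lt_or_ge d 1 with h | h
        · interval_cases d <;> norm_num
        · have h2 := ih h
          rw [pow_succ]
          have h3 : (4:ℕ) ≤ 4 ^ d := by
            calc (4:ℕ) = 4 ^ 1 := by norm_num
            _ ≤ 4 ^ d := Nat.pow_le_pow_right (by norm_num) h
          omega
    exact h1.trans (Nat.pow_le_pow_left h5 d)

private lemma nt_t_lt (t : ℕ) (ht : 2 ≤ t) : t < 2 ^ t - 1 := by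
  induction t with
  | zero => omega
  | succ t ih =>
    rcases Nat.lt_or_ge t 2 with h | h
    · interval_cases t
      · omega
      · norm_num
    · have h2 := ih h
      rw [pow_succ]
      have h3 : (4:ℕ) ≤ 2 ^ t := by
        calc (4:ℕ) = 2 ^ 2 := by norm_num
        _ ≤ 2 ^ t := Nat.pow_le_pow_right (by norm_num) h
      omega

private lemma nt_core (p d t : ℕ) (hp2 : 2 ≤ p) (hd1 : 1 ≤ d) (ht2 : 2 ≤ t)
    (hex : ¬(p = 3 ∧ d = 1 ∧ t = 2)) :
    d * t * Nat.gcd (p ^ d - 1) t < ∑ k ∈ Finset.range t, (p ^ d) ^ k := by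
  have hP2 : 2 ≤ p ^ d := by
    calc (2:ℕ) = 2 ^ 1 := by norm_num
    _ ≤ p ^ 1 := by simpa using hp2
    _ ≤ p ^ d := Nat.pow_le_pow_right (by omega) hd1
  have h2dP : 2 ^ d ≤ p ^ d := Nat.pow_le_pow_left hp2 d
  have hct : Nat.gcd (p ^ d - 1) t ∣ t := Nat.gcd_dvd_right _ _
  have hcle : Nat.gcd (p ^ d - 1) t ≤ t := Nat.le_of_dvd (by omega) hct
  by_cases hPP : p ^ d = 2
  · -- P = 2 : gcd (1, t) = 1 and d = 1, p = 2
    have hgc : Nat.gcd (p ^ d - 1) t = 1 := by rw [hPP]; simp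
    have hd1' : d = 1 := by
      by_contra h
      have h2 : 2 ≤ d := by omega
      have : 4 ≤ p ^ d := by
        calc (4:ℕ) = 2 ^ 2 := by norm_num
        _ ≤ p ^ 2 := Nat.pow_le_pow_left hp2 2
        _ ≤ p ^ d := Nat.pow_le_pow_right (by omega) h2
      omega
    subst hd1'
    rw [pow_one] at hPP
    subst hPP
    have hsum : ∑ k ∈ Finset.range t, 2 ^ k = 2 ^ t - 1 := by
      have := nt_geom 2 (by norm_num) t
      simpa using this
    simp only [pow_one]
    have h21 : (2:ℕ) - 1 = 1 := rfl
    rw [h21, Nat.gcd_one_left, one_mul, mul_one, hsum]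
    exact nt_t_lt t ht2
  · have hP3 : 3 ≤ p ^ d := by omega
    have hsumge2 : ∀ s : ℕ, 2 ≤ s → 1 + p ^ d ≤ ∑ k ∈ Finset.range s, (p ^ d) ^ k := by
      intro s hs
      have hsub : ({0, 1} : Finset ℕ) ⊆ Finset.range s := by
        intro x hx; simp at hx; rcases hx with rfl | rfl <;> simp [Finset.mem_range] <;> omega
      calc 1 + p ^ d = ∑ k ∈ ({0, 1} : Finset ℕ), (p ^ d) ^ k := by
            rw [Finset.sum_insert (by simp), Finset.sum_singleton]; simp
        _ ≤ _ := Finset.sum_le_sum_of_subset hsub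
    rcases Nat.lt_or_ge t 3 with ht3 | ht3
    · -- t = 2
      have ht2' : t = 2 := by omega
      subst ht2'
      have hA12 : ∑ k ∈ Finset.range 2, (p ^ d) ^ k = 1 + p ^ d := by
        simp [Finset.sum_range_succ]
      rw [hA12]
      have hcdvd2 : Nat.gcd (p ^ d - 1) 2 ∣ 2 := Nat.gcd_dvd_right _ _
      by_cases hp2' : p = 2
      · have hc1 : Nat.gcd (p ^ d - 1) 2 = 1 := by
          rcases (Nat.dvd_prime Nat.prime_two).1 hcdvd2 with h | h
          · exact h
          · exfalso
            have h2P : 2 ∣ p ^ d := by rw [hp2']; exact dvd_pow_self 2 (by omega)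
            have h2P1 : 2 ∣ p ^ d - 1 := h ▸ Nat.gcd_dvd_left _ _
            have : (2:ℕ) ∣ p ^ d - (p ^ d - 1) := Nat.dvd_sub h2P h2P1
            rw [Nat.sub_sub_self (by omega)] at this
            omega
        rw [hc1, mul_one]
        have h2d := nt_2d_le d hd1
        have : 2 ^ d = p ^ d := by rw [hp2']
        omega
      · have hp3 : 3 ≤ p := by
          rcases hp2.lt_or_eq with h | h
          · omega
          · omega
        have hc2 : Nat.gcd (p ^ d - 1) 2 ≤ 2 := Nat.le_of_dvd (by norm_num) hcdvd2
        have hexc : ¬(p = 3 ∧ d = 1) := by rintro ⟨h1, h2⟩; exact hex ⟨h1, h2, rfl⟩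
        have h4d := nt_4d_le p d hp3 hd1 hexc
        have : d * 2 * Nat.gcd (p ^ d - 1) 2 ≤ d * 2 * 2 :=
          Nat.mul_le_mul_left _ hc2
        omega
    · -- t ≥ 3
      have h01 : (1:ℕ) ≠ t - 1 := by omega
      have hsub : ({0, 1, t-1} : Finset ℕ) ⊆ Finset.range t := by
        intro x hx; simp at hx
        rcases hx with rfl | rfl | rfl <;> simp [Finset.mem_range] <;> omega
      have hA1ge : (p ^ d) ^ (t-1) + p ^ d + 1 ≤ ∑ k ∈ Finset.range t, (p ^ d) ^ k := by
        calc (p ^ d) ^ (t-1) + p ^ d + 1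
            = ∑ k ∈ ({0, 1, t-1} : Finset ℕ), (p ^ d) ^ k := by
              rw [Finset.sum_insert (by simp; omega), Finset.sum_insert (by simp; omega),
                Finset.sum_singleton]
              simp; ring
          _ ≤ _ := Finset.sum_le_sum_of_subset hsub
      -- main bound: d * t * t ≤ (p^d)^(t-1) + p^d
      have hkey : d * (t * t) ≤ (p ^ d) ^ (t-1) + p ^ d := by
        rcases Nat.lt_or_ge d 3 with hd3 | hd3
        · interval_cases d
          · -- d = 1
            have h1 := nt_tsq_le t ht3
            have h3P : 3 ^ (t-1) ≤ (p ^ 1) ^ (t-1) := Nat.pow_le_pow_left (by simpa using hP3) _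
            calc 1 * (t * t) = t ^ 2 := by ring
              _ ≤ 3 ^ (t-1) := h1
              _ ≤ (p ^ 1) ^ (t-1) := h3P
              _ ≤ (p ^ 1) ^ (t-1) + p ^ 1 := Nat.le_add_right _ _
          · -- d = 2
            have h1 := nt_2tsq_le t ht3
            have h4P2 : (4:ℕ) ≤ p ^ 2 := by
              calc (4:ℕ) = 2 ^ 2 := by norm_num
              _ ≤ p ^ 2 := Nat.pow_le_pow_left hp2 2
            have h4P : 4 ^ (t-1) ≤ (p ^ 2) ^ (t-1) := Nat.pow_le_pow_left h4P2 _
            calc 2 * (t * t) = 2 * t ^ 2 := by ring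
              _ ≤ 4 ^ (t-1) + 4 := h1
              _ ≤ (p ^ 2) ^ (t-1) + p ^ 2 := Nat.add_le_add h4P h4P2
        · -- d ≥ 3
          have h1 := nt_d_le d (by omega)
          have h2 := nt_tsq_le8 t ht3
          have step : d * (t * t) ≤ 2 ^ (d - 1) * (2 * 8 ^ (t-2)) := by
            have := Nat.mul_le_mul h1 h2
            calc d * (t * t) = d * (t^2) := by ring
            _ ≤ 2 ^ (d-1) * (2 * 8 ^ (t-2)) := this
          have step2 : 2 ^ (d - 1) * (2 * 8 ^ (t-2)) = 2 ^ (d + 3*(t-2)) := by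
            have h8 : (8:ℕ) = 2 ^ 3 := by norm_num
            rw [h8, ← pow_mul, ← mul_assoc, ← pow_succ, ← pow_add]
            congr 1
            omega
          have step3 : 2 ^ (d + 3*(t-2)) ≤ 2 ^ (d * (t-1)) := by
            apply Nat.pow_le_pow_right (by norm_num)
            have : 3 * (t-2) ≤ d * (t-2) := Nat.mul_le_mul_right _ hd3
            have hd2 : d * (t-1) = d * (t-2) + d := by
              rw [← Nat.mul_succ]
              congr 1
              omega
            omega
          have step4 : 2 ^ (d * (t-1)) ≤ (p ^ d) ^ (t-1) := by
            rw [pow_mul]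
            exact Nat.pow_le_pow_left h2dP _
          omega
      have : d * t * Nat.gcd (p ^ d - 1) t ≤ d * (t * t) := by
        calc d * t * Nat.gcd (p ^ d - 1) t ≤ d * t * t := Nat.mul_le_mul_left _ hcle
        _ = d * (t * t) := by ring
      omega

private lemma nt_main (p m i : ℕ) (hp2 : 2 ≤ p) (hi : 1 ≤ i) (him : i < m)
    (hex : ¬(p = 3 ∧ m = 2)) :
    m * Nat.gcd ((p ^ i - 1) ^ 2) (p ^ m - 1) < p ^ m - 1 := by
  have hd1 : 0 < Nat.gcd i m := Nat.gcd_pos_of_pos_left m hi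
  have hdm : Nat.gcd i m ∣ m := Nat.gcd_dvd_right i m
  have hdi : Nat.gcd i m ∣ i := Nat.gcd_dvd_left i m
  obtain ⟨t, hmt⟩ := hdm
  have hdlt : Nat.gcd i m < m := lt_of_le_of_lt (Nat.le_of_dvd (by omega) hdi) him
  have ht2 : 2 ≤ t := by
    rcases Nat.lt_or_ge t 2 with h | h
    · interval_cases t
      · omega
      · omega
    · exact h
  have hgpos : 0 < p ^ Nat.gcd i m - 1 := by
    have := nt_one_le_pow p (Nat.gcd i m) hp2
    have h2 : 2 ≤ p ^ Nat.gcd i m := by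
      calc (2:ℕ) = 2 ^ 1 := by norm_num
      _ ≤ p ^ 1 := by simpa using hp2
      _ ≤ p ^ Nat.gcd i m := Nat.pow_le_pow_right (by omega) hd1
    omega
  have hPt : (p ^ Nat.gcd i m) ^ t = p ^ m := by rw [← pow_mul, ← hmt]
  have hgA : (p ^ Nat.gcd i m - 1) * (∑ k ∈ Finset.range t, (p ^ Nat.gcd i m) ^ k) = p ^ m - 1 := by
    rw [nt_geom _ (by omega) t, hPt]
  have hgcd1 : Nat.gcd (p ^ i - 1) (p ^ m - 1) = p ^ Nat.gcd i m - 1 :=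
    nt_gcd_pow_sub_one p hp2 i m
  obtain ⟨B', hB'⟩ : (p ^ Nat.gcd i m - 1) ∣ (p ^ i - 1) := hgcd1 ▸ Nat.gcd_dvd_left _ _
  have hcop : Nat.Coprime ((p ^ i - 1) / (p ^ Nat.gcd i m - 1))
      ((p ^ m - 1) / (p ^ Nat.gcd i m - 1)) := by
    have h := Nat.coprime_div_gcd_div_gcd (m := p ^ i - 1) (n := p ^ m - 1)
      (by rw [hgcd1]; omega)
    rwa [hgcd1] at h
  have hB'q : (p ^ i - 1) / (p ^ Nat.gcd i m - 1) = B' := by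
    rw [hB']; exact Nat.mul_div_cancel_left _ hgpos
  have hA1q : (p ^ m - 1) / (p ^ Nat.gcd i m - 1) = ∑ k ∈ Finset.range t, (p ^ Nat.gcd i m) ^ k := by
    rw [← hgA]; exact Nat.mul_div_cancel_left _ hgpos
  have hcop2 : Nat.Coprime B' (∑ k ∈ Finset.range t, (p ^ Nat.gcd i m) ^ k) := by
    rw [← hB'q, ← hA1q]; exact hcop
  have hU : Nat.gcd ((p ^ i - 1) ^ 2) (p ^ m - 1)
      = (p ^ Nat.gcd i m - 1) * Nat.gcd (p ^ Nat.gcd i m - 1) t := by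
    rw [hB', ← hgA, mul_pow, sq (p ^ Nat.gcd i m - 1), mul_assoc, Nat.gcd_mul_left]
    congr 1
    rw [mul_comm (p ^ Nat.gcd i m - 1) (B' ^ 2),
      Nat.Coprime.gcd_mul_left_cancel _ (hcop2.pow_left 2)]
    -- gcd (p^d - 1) A1 = gcd (p^d -1) t
    have hmod : (∑ k ∈ Finset.range t, (p ^ Nat.gcd i m) ^ k) % (p ^ Nat.gcd i m - 1)
        = t % (p ^ Nat.gcd i m - 1) := nt_geom_mod _ (by omega) t
    rw [Nat.gcd_rec (p ^ Nat.gcd i m - 1) (∑ k ∈ Finset.range t, (p ^ Nat.gcd i m) ^ k), hmod,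
      ← Nat.gcd_rec]
  rw [hU, ← hgA]
  have hkey : m * Nat.gcd (p ^ Nat.gcd i m - 1) t < ∑ k ∈ Finset.range t, (p ^ Nat.gcd i m) ^ k := by
    have hexc : ¬(p = 3 ∧ Nat.gcd i m = 1 ∧ t = 2) := by
      rintro ⟨h1, h2, h3⟩
      refine hex ⟨h1, ?_⟩
      rw [hmt, h2, h3]
    have := nt_core p (Nat.gcd i m) t hp2 hd1 ht2 hexc
    calc m * Nat.gcd (p ^ Nat.gcd i m - 1) t
        = Nat.gcd i m * t * Nat.gcd (p ^ Nat.gcd i m - 1) t := by rw [← hmt]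
      _ < _ := this
  calc m * ((p ^ Nat.gcd i m - 1) * Nat.gcd (p ^ Nat.gcd i m - 1) t)
      = (p ^ Nat.gcd i m - 1) * (m * Nat.gcd (p ^ Nat.gcd i m - 1) t) := by ring
    _ < (p ^ Nat.gcd i m - 1) * (∑ k ∈ Finset.range t, (p ^ Nat.gcd i m) ^ k) :=
        mul_lt_mul_of_pos_left hkey hgpos

section Grp

variable {F : Type*} [Field F] [Fintype F] {p m : ℕ}

private lemma sl_pow_mod (hm : 0 < m) (hF : Fintype.card F = p ^ m) (x : F) (i : ℕ) :
    x ^ p ^ i = x ^ p ^ (i % m) := by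
  have key : ∀ k (y : F), y ^ (p ^ m) ^ k = y := by
    intro k
    induction k with
    | zero => intro y; simp
    | succ k ih =>
      intro y
      rw [pow_succ, pow_mul, ih, ← hF, FiniteField.pow_card]
  have h1 : p ^ i = (p ^ m) ^ (i / m) * p ^ (i % m) := by
    rw [← pow_mul, ← pow_add, Nat.div_add_mod]
  rw [h1, pow_mul, key]

private lemma sl_upow_mod (hm : 0 < m) (hF : Fintype.card F = p ^ m) (u : Fˣ) (i : ℕ) :
    u ^ p ^ i = u ^ p ^ (i % m) := by
  ext
  rw [Units.val_pow_eq_pow_val, Units.val_pow_eq_pow_val]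
  exact sl_pow_mod hm hF _ i

private lemma sl_pow_zero_mod (hm : 0 < m) (hF : Fintype.card F = p ^ m) (x : F) {s : ℕ}
    (hs : s % m = 0) : x ^ p ^ s = x := by
  rw [sl_pow_mod hm hF x s, hs, pow_zero, pow_one]

private lemma sl_upow_zero_mod (hm : 0 < m) (hF : Fintype.card F = p ^ m) (u : Fˣ) {s : ℕ}
    (hs : s % m = 0) : u ^ p ^ s = u := by
  rw [sl_upow_mod hm hF u s, hs, pow_zero, pow_one]

private lemma sl_form_mul {g h : Equiv.Perm F} {c d : Fˣ} {i j : ℕ}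
    (hg : ∀ x : F, g x = ↑c * x ^ p ^ i) (hh : ∀ x : F, h x = ↑d * x ^ p ^ j) :
    ∀ x : F, (g * h) x = ↑(c * d ^ p ^ i) * x ^ p ^ (i + j) := by
  intro x
  rw [Equiv.Perm.mul_apply, hh, hg, Units.val_mul, Units.val_pow_eq_pow_val]
  rw [mul_pow, ← pow_mul, ← pow_add, add_comm j i]
  ring

private lemma sl_form_inv (hm : 0 < m) (hF : Fintype.card F = p ^ m) {g : Equiv.Perm F}
    {a : Fˣ} {j : ℕ} (hj : j < m) (hg : ∀ x : F, g x = ↑a * x ^ p ^ j) :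
    ∀ x : F, g⁻¹ x = ↑(a⁻¹ ^ p ^ ((m - j) % m)) * x ^ p ^ ((m - j) % m) := by
  have hjj : ((m - j) % m + j) % m = 0 := by
    rcases Nat.eq_zero_or_pos j with rfl | hj0
    · simp
    · have h1 : (m - j) % m = m - j := Nat.mod_eq_of_lt (by omega)
      have h2 : m - j + j = m := by omega
      rw [h1, h2, Nat.mod_self]
  have hid : ∀ y : F, g (↑(a⁻¹ ^ p ^ ((m - j) % m)) * y ^ p ^ ((m - j) % m)) = y := by
    intro y
    rw [hg, mul_pow, ← pow_mul, ← pow_add]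
    rw [Units.val_pow_eq_pow_val, ← pow_mul, ← pow_add]
    rw [sl_pow_zero_mod hm hF y hjj]
    have : (↑a : F) * ((↑a⁻¹ : F) ^ p ^ ((m - j) % m + j)) = 1 := by
      have hu : (a⁻¹ : Fˣ) ^ p ^ ((m - j) % m + j) = a⁻¹ := sl_upow_zero_mod hm hF a⁻¹ hjj
      rw [← Units.val_pow_eq_pow_val, hu]
      rw [← Units.val_mul, mul_inv_cancel, Units.val_one]
    rw [← mul_assoc, this, one_mul]
  intro x
  apply g.injective
  have hgx : g (g⁻¹ x) = x := Equiv.apply_symm_apply g x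
  rw [hgx, hid]

private lemma sl_conj (hm : 0 < m) (hF : Fintype.card F = p ^ m) {g n : Equiv.Perm F}
    {a c : Fˣ} {i j : ℕ} (hj : j < m) (hi : i < m)
    (hg : ∀ x : F, g x = ↑a * x ^ p ^ j) (hn : ∀ x : F, n x = ↑c * x ^ p ^ i) :
    ∀ x : F, (g * n * g⁻¹) x = ↑(a * (a ^ p ^ i)⁻¹ * c ^ p ^ j) * x ^ p ^ i := by
  intro x
  have h1 : (g * n * g⁻¹) x = g (n (g⁻¹ x)) := rfl
  rw [h1, sl_form_inv hm hF hj hg, hn, hg]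
  set j' := (m - j) % m with hj'
  have hiji : (j' + i + j) % m = i % m := by
    rcases Nat.eq_zero_or_pos j with rfl | hj0
    · simp [hj']
    · have h1 : j' = m - j := by rw [hj']; exact Nat.mod_eq_of_lt (by omega)
      have h2 : m - j + i + j = m + i := by omega
      rw [h1, h2, Nat.add_mod_left]
  -- expand
  simp only [Units.val_pow_eq_pow_val, Units.val_mul, Units.val_inv_eq_inv_val, mul_pow,
    ← pow_mul, ← pow_add]
  rw [sl_pow_mod hm hF x (j' + i + j), hiji, ← sl_pow_mod hm hF x i]
  have hua : ((↑a : F))⁻¹ ^ p ^ (j' + i + j) = ((↑a : F))⁻¹ ^ p ^ i := by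
    rw [sl_pow_mod hm hF _ (j' + i + j), hiji, ← sl_pow_mod hm hF _ i]
  rw [hua, inv_pow]
  ring

section Defs

variable (p m : ℕ) (F : Type*) [Field F] [Fintype F]

private def mSub : Subgroup (Equiv.Perm F) where
  carrier := {e | ∃ c : Fˣ, ∀ x : F, e x = ↑c * x}
  one_mem' := ⟨1, by simp⟩
  mul_mem' := by
    rintro g h ⟨c, hc⟩ ⟨d, hd⟩
    refine ⟨c * d, fun x => ?_⟩
    rw [Equiv.Perm.mul_apply, hd, hc, Units.val_mul]
    ring
  inv_mem' := by
    rintro g ⟨c, hc⟩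
    refine ⟨c⁻¹, fun x => ?_⟩
    apply g.injective
    have hgx : g (g⁻¹ x) = x := Equiv.apply_symm_apply g x
    rw [hgx, hc, Units.val_inv_eq_inv_val, ← mul_assoc,
      mul_inv_cancel₀ (Units.ne_zero c), one_mul]

private def slSub (hm : 0 < m) (hF : Fintype.card F = p ^ m) : Subgroup (Equiv.Perm F) where
  carrier := {g | ∃ c : Fˣ, ∃ i : ℕ, i < m ∧ ∀ x : F, g x = ↑c * x ^ p ^ i}
  one_mem' := ⟨1, 0, hm, by simp⟩
  mul_mem' := by
    rintro g h ⟨c, i, hi, hgf⟩ ⟨d, j, hj, hhf⟩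
    refine ⟨c * d ^ p ^ i, (i + j) % m, Nat.mod_lt _ hm, fun x => ?_⟩
    rw [sl_form_mul hgf hhf x, sl_pow_mod hm hF x (i + j)]
  inv_mem' := by
    rintro g ⟨c, i, hi, hgf⟩
    exact ⟨c⁻¹ ^ p ^ ((m - i) % m), (m - i) % m, Nat.mod_lt _ hm, sl_form_inv hm hF hi hgf⟩

end Defs

end Grp

/-- The subgroup of the permutation group of a field `F` consisting of (generated by) all
multiplication maps `x ↦ c·x` with `c ∈ F^×`. -/
def mulMapsSubgroup (F : Type*) [Field F] : Subgroup (Equiv.Perm F) :=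
  Subgroup.closure {e : Equiv.Perm F | ∃ c : Fˣ, ∀ x : F, e x = (c : F) * x}

/-- For `(p, m) ≠ (3, 2)`, every abelian normal subgroup `N` of a transitive subgroup `A` of
`ΓL₁(p^m)` consists of multiplication maps; in particular, `A ⊓ mulMapsSubgroup F` is the
unique largest abelian normal subgroup of `A` (it is abelian, normal in `A`, and contains
every abelian normal subgroup of `A`). -/
theorem abelian_normal_subgroup_of_transitive_gammaL_one
    (p m : ℕ) (hp : p.Prime) (hm : 0 < m) (hpm : ¬(p = 3 ∧ m = 2))
    (F : Type*) [Field F] [Fintype F] (hF : Fintype.card F = p ^ m)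
    (ω : Fˣ) (hω : ∀ x : Fˣ, x ∈ Subgroup.zpowers ω)
    (A N : Subgroup (Equiv.Perm F))
    (hA : A ≤ Subgroup.closure {g : Equiv.Perm F |
        (∀ x : F, g x = x ^ p) ∨ (∀ x : F, g x = (ω : F) * x)})
    (htrans : ∀ x y : F, x ≠ 0 → y ≠ 0 → ∃ g ∈ A, g x = y)
    (hNA : N ≤ A) (hab : ∀ a ∈ N, ∀ b ∈ N, a * b = b * a)
    (hnorm : ∀ g ∈ A, ∀ nn ∈ N, g * nn * g⁻¹ ∈ N) :
    N ≤ mulMapsSubgroup F ∧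
    N ≤ A ⊓ mulMapsSubgroup F ∧
    (∀ a ∈ A ⊓ mulMapsSubgroup F, ∀ b ∈ A ⊓ mulMapsSubgroup F, a * b = b * a) ∧
    (∀ g ∈ A, ∀ nn ∈ A ⊓ mulMapsSubgroup F, g * nn * g⁻¹ ∈ A ⊓ mulMapsSubgroup F) := by
  classical
  have hp2 : 2 ≤ p := hp.two_le
  have hMeq : mulMapsSubgroup F = mSub F := by
    have h : {e : Equiv.Perm F | ∃ c : Fˣ, ∀ x : F, e x = (c : F) * x} = ↑(mSub F) := rfl
    rw [mulMapsSubgroup, h, Subgroup.closure_eq]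
  have hAS : A ≤ slSub p m F hm hF := by
    refine le_trans hA ?_
    rw [Subgroup.closure_le]
    rintro g (hg | hg)
    · refine ⟨1, 1 % m, Nat.mod_lt _ hm, fun x => ?_⟩
      rw [hg x, Units.val_one, one_mul, ← sl_pow_mod hm hF x 1, pow_one]
    · exact ⟨ω, 0, hm, fun x => by rw [hg x, pow_zero, pow_one]⟩
  have htr : ∀ a : Fˣ, ∃ g, g ∈ A ∧ ∃ j : ℕ, j < m ∧ ∀ x : F, g x = ↑a * x ^ p ^ j := by
    intro a
    obtain ⟨g, hgA, hg1⟩ := htrans 1 ↑a one_ne_zero (Units.ne_zero a)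
    obtain ⟨b, j, hj, hform⟩ := hAS hgA
    have hba : (b : F) = ↑a := by
      have h1 := hform 1
      rw [hg1, one_pow, mul_one] at h1
      exact h1.symm
    exact ⟨g, hgA, j, hj, fun x => by rw [hform x, hba]⟩
  -- Main claim: every element of N is a multiplication map.
  have hKey : ∀ n ∈ N, ∃ c : Fˣ, ∀ x : F, n x = ↑c * x := by
    intro n hnN
    obtain ⟨c, i, hi, hform⟩ := hAS (hNA hnN)
    by_cases hi0 : i = 0
    · exact ⟨c, fun x => by have h := hform x; rwa [hi0, pow_zero, pow_one] at h⟩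
    exfalso
    choose gg hggA jj hjjm hggform using htr
    have hconj : ∀ a : Fˣ, ∀ x : F, (gg a * n * (gg a)⁻¹) x
        = ↑(a * (a ^ p ^ i)⁻¹ * c ^ p ^ (jj a)) * x ^ p ^ i :=
      fun a => sl_conj hm hF (hjjm a) hi (hggform a) hform
    set e : Fˣ → Fˣ := fun a => a * (a ^ p ^ i)⁻¹ * c ^ p ^ (jj a) with he
    have hmemN : ∀ a : Fˣ, gg a * n * (gg a)⁻¹ ∈ N := fun a => hnorm _ (hggA a) n hnN
    have hcomm : ∀ a b : Fˣ, e a * e b ^ p ^ i = e b * e a ^ p ^ i := by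
      intro a b
      have h := hab _ (hmemN a) _ (hmemN b)
      have h1 : (gg a * n * (gg a)⁻¹) ((gg b * n * (gg b)⁻¹) 1)
          = (gg b * n * (gg b)⁻¹) ((gg a * n * (gg a)⁻¹) 1) := by
        rw [← Equiv.Perm.mul_apply, ← Equiv.Perm.mul_apply, h]
      rw [hconj b 1, hconj a 1, one_pow, mul_one, mul_one, hconj a _, hconj b _] at h1
      simp only [Units.val_mul, Units.val_pow_eq_pow_val, Units.val_inv_eq_inv_val] at h1
      ext
      simp only [he, Units.val_mul, Units.val_pow_eq_pow_val, Units.val_inv_eq_inv_val]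
      push_cast
      linear_combination h1
    set φ : Fˣ →* Fˣ := MonoidHom.mk' (fun u => u / u ^ p ^ i)
      (fun u v => by
        show (u * v) / (u * v) ^ p ^ i = (u / u ^ p ^ i) * (v / v ^ p ^ i)
        rw [mul_pow, ← div_mul_div_comm]) with hφ
    have hφval : ∀ u : Fˣ, φ u = u / u ^ p ^ i := fun u => rfl
    have hφe : ∀ a b : Fˣ, φ (e a) = φ (e b) := by
      intro a b
      rw [hφval, hφval, div_eq_div_iff_mul_eq_mul]
      exact hcomm a b
    have h2 : ∀ a : Fˣ, φ (e a) = φ (φ a) * φ c ^ p ^ (jj a) := by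
      intro a
      have : e a = a * (a ^ p ^ i)⁻¹ * c ^ p ^ (jj a) := rfl
      rw [this, map_mul, map_mul, map_inv, map_pow, map_pow]
      rw [hφval (φ a), div_eq_mul_inv]
    have hψr : ∀ a : Fˣ, φ (φ a) = φ (e 1) * (φ c ^ p ^ (jj a))⁻¹ := by
      intro a
      rw [eq_mul_inv_iff_mul_eq, ← h2 a, hφe a 1]
    -- Range of ψ := φ ∘ φ is contained in a set of size m
    set ψ : Fˣ →* Fˣ := φ.comp φ with hψdef
    have hψval : ∀ a : Fˣ, ψ a = φ (φ a) := fun a => rfl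
    set T : Finset Fˣ := (Finset.range m).image (fun k => φ (e 1) * (φ c ^ p ^ k)⁻¹) with hT
    have hrange : Set.range ψ ⊆ ↑T := by
      rintro y ⟨a, rfl⟩
      rw [hψval, hψr a]
      simp only [hT, Finset.coe_image, Set.mem_image, Finset.mem_coe, Finset.mem_range]
      exact ⟨jj a, hjjm a, rfl⟩
    have hcard1 : Nat.card Fˣ = Nat.card (Fˣ ⧸ ψ.ker) * Nat.card ψ.ker :=
      Subgroup.card_eq_card_quotient_mul_card_subgroup ψ.ker
    have hcard2 : Nat.card (Fˣ ⧸ ψ.ker) = Nat.card ψ.range :=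
      Nat.card_congr (QuotientGroup.quotientKerEquivRange ψ).toEquiv
    have hrle : Nat.card ψ.range ≤ m := by
      have h1 : Nat.card ψ.range = (Set.range ψ).ncard := by
        rw [← Nat.card_coe_set_eq, ← MonoidHom.coe_range]
        rfl
      rw [h1]
      calc (Set.range ψ).ncard ≤ (↑T : Set Fˣ).ncard :=
            Set.ncard_le_ncard hrange T.finite_toSet
        _ = T.card := Set.ncard_coe_finset T
        _ ≤ m := Finset.card_image_le.trans (by simp)
    have hq1 : Nat.card Fˣ = p ^ m - 1 := by
      rw [Nat.card_eq_fintype_card, Fintype.card_units, hF]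
    have hipos : 1 ≤ p ^ i := Nat.one_le_pow _ _ (by omega)
    have hGpos : 0 < Nat.gcd ((p ^ i - 1) ^ 2) (p ^ m - 1) := by
      apply Nat.gcd_pos_of_pos_right
      have : 2 ≤ p ^ m := by
        calc (2:ℕ) = 2 ^ 1 := by norm_num
        _ ≤ p ^ 1 := by simpa using hp2
        _ ≤ p ^ m := Nat.pow_le_pow_right (by omega) hm
      omega
    have hker : ∀ u : Fˣ, u ∈ ψ.ker → u ^ Nat.gcd ((p ^ i - 1) ^ 2) (p ^ m - 1) = 1 := by
      intro u hu
      have hu1 : φ (φ u) = 1 := hu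
      have hK1 : u ^ (p ^ i - 1) ^ 2 = 1 := by
        have h3 : φ u = (φ u) ^ p ^ i := by
          have h := hu1
          rw [hφval (φ u), div_eq_one] at h
          exact h
        rw [hφval u] at h3
        have h4 : u * (u ^ p ^ i) ^ p ^ i = u ^ p ^ i * u ^ p ^ i := by
          have h5 := h3
          rw [div_pow, div_eq_div_iff_mul_eq_mul] at h5
          exact h5
        have h6 : u ^ (1 + p ^ i * p ^ i) = u ^ (p ^ i + p ^ i) := by
          rw [pow_add, pow_add, pow_one, pow_mul]
          exact h4
        obtain ⟨l, hl⟩ : ∃ l, p ^ i = l + 1 := ⟨p ^ i - 1, by omega⟩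
        have h7 : 1 + p ^ i * p ^ i = (p ^ i + p ^ i) + (p ^ i - 1) ^ 2 := by
          rw [hl]
          have : l + 1 - 1 = l := by omega
          rw [this]
          ring
        rw [h7, pow_add] at h6
        have h8 : u ^ (p ^ i + p ^ i) * u ^ (p ^ i - 1) ^ 2
            = u ^ (p ^ i + p ^ i) * 1 := by rw [mul_one]; exact h6
        exact mul_left_cancel h8
      have hQ1 : u ^ (p ^ m - 1) = 1 := by
        have h := pow_card_eq_one (G := Fˣ) (x := u)
        rwa [Fintype.card_units, hF] at h
      exact pow_gcd_eq_one.2 ⟨hK1, hQ1⟩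
    have hkle : Nat.card ψ.ker ≤ Nat.gcd ((p ^ i - 1) ^ 2) (p ^ m - 1) := by
      have hsub : (↑ψ.ker : Set Fˣ) ⊆
          ↑(Finset.univ.filter fun u : Fˣ => u ^ Nat.gcd ((p ^ i - 1) ^ 2) (p ^ m - 1) = 1) := by
        intro u hu
        simp only [Finset.coe_filter, Set.mem_setOf_eq, Finset.mem_univ, true_and]
        exact hker u hu
      calc Nat.card ψ.ker = (↑ψ.ker : Set Fˣ).ncard := by
            rw [← Nat.card_coe_set_eq]
            rfl
        _ ≤ ((Finset.univ.filter fun u : Fˣ =>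
              u ^ Nat.gcd ((p ^ i - 1) ^ 2) (p ^ m - 1) = 1 : Finset Fˣ) : Set Fˣ).ncard :=
            Set.ncard_le_ncard hsub (Finset.finite_toSet _)
        _ = (Finset.univ.filter fun u : Fˣ =>
              u ^ Nat.gcd ((p ^ i - 1) ^ 2) (p ^ m - 1) = 1).card := Set.ncard_coe_finset _
        _ ≤ Multiset.card (Polynomial.nthRoots (Nat.gcd ((p ^ i - 1) ^ 2) (p ^ m - 1))
              ((Units.coeHom F) 1)) :=
            card_nthRoots_subgroup_units (Units.coeHom F) (fun _ _ h => Units.ext h) hGpos 1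
        _ ≤ Nat.gcd ((p ^ i - 1) ^ 2) (p ^ m - 1) := by
            simpa using Polynomial.card_nthRoots (Nat.gcd ((p ^ i - 1) ^ 2) (p ^ m - 1)) (1 : F)
    have hmain := nt_main p m i hp2 (by omega) hi hpm
    have hfin : Nat.card Fˣ ≤ m * Nat.gcd ((p ^ i - 1) ^ 2) (p ^ m - 1) := by
      rw [hcard1, hcard2]
      exact Nat.mul_le_mul hrle hkle
    omega

  refine ⟨?_, ?_, ?_, ?_⟩
  · intro n hn
    rw [hMeq]
    exact hKey n hn
  · intro n hn
    rw [Subgroup.mem_inf]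
    exact ⟨hNA hn, by rw [hMeq]; exact hKey n hn⟩
  · intro a ha b hb
    rw [Subgroup.mem_inf, hMeq] at ha hb
    obtain ⟨cc, hcc⟩ := ha.2
    obtain ⟨dd, hdd⟩ := hb.2
    ext x
    rw [Equiv.Perm.mul_apply, Equiv.Perm.mul_apply, hcc, hdd, hcc, hdd]
    ring
  · intro g hg nn hnn
    rw [Subgroup.mem_inf] at hnn
    rw [Subgroup.mem_inf]
    constructor
    · exact A.mul_mem (A.mul_mem hg hnn.1) (A.inv_mem hg)
    · obtain ⟨a, j, hj, hgf⟩ := hAS hg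
      have hnn2 := hnn.2
      rw [hMeq] at hnn2
      obtain ⟨cc, hcc⟩ := hnn2
      have hn0 : ∀ x : F, nn x = ↑cc * x ^ p ^ 0 := by
        intro x; rw [pow_zero, pow_one]; exact hcc x
      have hcj := sl_conj hm hF hj hm hgf hn0
      rw [hMeq]
      refine ⟨a * (a ^ p ^ 0)⁻¹ * cc ^ p ^ j, fun x => ?_⟩
      rw [hcj x, pow_zero, pow_one x]
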